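/- Let M ∈ ℝ^{m×n}, A, S ∈ ℝ^{n×n}, δ ∈ ℝⁿ, and ρ > 0, and set K = MᵀM. Then the function h(C) = (1/2)‖M − MC‖_F² + (ρ/2)‖Cᵀ1 − 1 + δ/ρ‖₂² + (ρ/2)‖C − A + S/ρ‖_F², defined for C ∈ ℝ^{n×n}, has a unique global minimizer, namely C* = (K + ρI_n + ρ11ᵀ)⁻¹(K + ρ11ᵀ − 1δᵀ + ρA − S), where 1 ∈ ℝⁿ is the all-ones vector; here K + ρI_n + ρ11ᵀ is invertible. -/

import Mathlib

open Matrix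

namespace CUpdateAux

variable {α β γ : Type*} [Fintype α] [Fintype β] [Fintype γ]

/-- Frobenius inner product of two real matrices. -/
noncomputable def inn (X Y : Matrix α β ℝ) : ℝ := ∑ i, ∑ j, X i j * Y i j

lemma inn_self_nonneg (X : Matrix α β ℝ) : 0 ≤ inn X X :=
  Finset.sum_nonneg fun _ _ => Finset.sum_nonneg fun _ _ => mul_self_nonneg _

lemma sum_sq_eq_inn (X : Matrix α β ℝ) : ∑ i, ∑ j, X i j ^ 2 = inn X X := by
  simp [inn, sq]

lemma inn_eq_trace (X Y : Matrix α β ℝ) : inn X Y = (Xᵀ * Y).trace := by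
  simp only [inn, Matrix.trace, Matrix.diag, Matrix.mul_apply, Matrix.transpose_apply]
  rw [Finset.sum_comm]

lemma inn_mul_right (B : Matrix γ α ℝ) (X : Matrix γ β ℝ) (Y : Matrix α β ℝ) :
    inn X (B * Y) = inn (Bᵀ * X) Y := by
  rw [inn_eq_trace, inn_eq_trace, Matrix.transpose_mul, Matrix.transpose_transpose,
    Matrix.mul_assoc]

lemma inn_add_left (X Y Z : Matrix α β ℝ) : inn (X + Y) Z = inn X Z + inn Y Z := by
  simp [inn, add_mul, Finset.sum_add_distrib]

lemma inn_sub_left (X Y Z : Matrix α β ℝ) : inn (X - Y) Z = inn X Z - inn Y Z := by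
  simp [inn, sub_mul, Finset.sum_sub_distrib]

lemma inn_neg_left (X Z : Matrix α β ℝ) : inn (-X) Z = - inn X Z := by
  simp [inn, Finset.sum_neg_distrib]

lemma inn_smul_left (c : ℝ) (X Z : Matrix α β ℝ) : inn (c • X) Z = c * inn X Z := by
  simp [inn, Finset.mul_sum, mul_assoc]

lemma inn_zero_left (Z : Matrix α β ℝ) : inn (0 : Matrix α β ℝ) Z = 0 := by
  simp [inn]

lemma sum_sq_sub (E F : Matrix α β ℝ) :
    ∑ i, ∑ j, (E - F) i j ^ 2 =
      (∑ i, ∑ j, E i j ^ 2) - 2 * inn E F + ∑ i, ∑ j, F i j ^ 2 := by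
  have : ∀ i ∈ Finset.univ, ∑ j, (E - F) i j ^ 2 =
      ∑ j, (E i j ^ 2 - 2 * (E i j * F i j) + F i j ^ 2) := by
    intro i _
    refine Finset.sum_congr rfl fun j _ => ?_
    simp [Matrix.sub_apply]; ring
  rw [Finset.sum_congr rfl this]
  simp only [Finset.sum_add_distrib, Finset.sum_sub_distrib, inn, Finset.mul_sum]

lemma sum_sq_add (E F : Matrix α β ℝ) :
    ∑ i, ∑ j, (E + F) i j ^ 2 =
      (∑ i, ∑ j, E i j ^ 2) + 2 * inn E F + ∑ i, ∑ j, F i j ^ 2 := by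
  have : ∀ i ∈ Finset.univ, ∑ j, (E + F) i j ^ 2 =
      ∑ j, (E i j ^ 2 + 2 * (E i j * F i j) + F i j ^ 2) := by
    intro i _
    refine Finset.sum_congr rfl fun j _ => ?_
    simp [Matrix.add_apply]; ring
  rw [Finset.sum_congr rfl this]
  simp only [Finset.sum_add_distrib, inn, Finset.mul_sum]

lemma vsum_add (u v : α → ℝ) :
    ∑ i, (u i + v i) ^ 2 =
      (∑ i, u i ^ 2) + 2 * (∑ i, u i * v i) + ∑ i, v i ^ 2 := by
  have : ∀ i ∈ Finset.univ, (u i + v i) ^ 2 =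
      u i ^ 2 + 2 * (u i * v i) + v i ^ 2 := fun i _ => by ring
  rw [Finset.sum_congr rfl this]
  simp only [Finset.sum_add_distrib, Finset.mul_sum]

lemma cross_vec (w : β → ℝ) (D : Matrix α β ℝ) :
    ∑ i, w i * (Dᵀ *ᵥ fun _ => (1 : ℝ)) i
      = inn (vecMulVec (fun _ => (1 : ℝ)) w) D := by
  simp only [inn, Matrix.vecMulVec_apply, Matrix.mulVec, dotProduct,
    Matrix.transpose_apply, one_mul, mul_one]
  rw [Finset.sum_comm]
  simp [Finset.mul_sum, mul_comm]

lemma inn_self_le_zero_eq_zero (X : Matrix α β ℝ) (h : inn X X ≤ 0) : X = 0 := by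
  have h0 : inn X X = 0 := le_antisymm h (inn_self_nonneg X)
  ext i j
  have hi := (Finset.sum_eq_zero_iff_of_nonneg
      (fun i (_ : i ∈ Finset.univ) => Finset.sum_nonneg
        fun j (_ : j ∈ Finset.univ) => mul_self_nonneg (X i j))).mp h0 i (Finset.mem_univ i)
  have hj := (Finset.sum_eq_zero_iff_of_nonneg
      (fun j (_ : j ∈ Finset.univ) => mul_self_nonneg (X i j))).mp hi j (Finset.mem_univ j)
  simpa using mul_self_eq_zero.mp hj

end CUpdateAux

open CUpdateAux

/-- The C-update (Eq. (14)–(15)): with `K = MᵀM`, the function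
`h(C) = (1/2)‖M - MC‖_F² + (ρ/2)‖Cᵀ1 - 1 + δ/ρ‖₂² + (ρ/2)‖C - A + S/ρ‖_F²`
has the unique global minimizer
`C* = (K + ρI + ρ11ᵀ)⁻¹ (K + ρ11ᵀ - 1δᵀ + ρA - S)`, the matrix
`K + ρI + ρ11ᵀ` being invertible. -/
theorem c_update_minimizer (m n : ℕ) (M : Matrix (Fin m) (Fin n) ℝ)
    (A S : Matrix (Fin n) (Fin n) ℝ) (δ : Fin n → ℝ) (ρ : ℝ) (hρ : 0 < ρ)
    (K : Matrix (Fin n) (Fin n) ℝ) (hK : K = Mᵀ * M)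
    (h : Matrix (Fin n) (Fin n) ℝ → ℝ)
    (hh : ∀ C, h C =
        (1 / 2) * (∑ i, ∑ j, (M - M * C) i j ^ 2) +
          (ρ / 2) * (∑ i, ((Cᵀ *ᵥ fun _ => (1 : ℝ)) i - 1 + δ i / ρ) ^ 2) +
          (ρ / 2) * ∑ i, ∑ j, (C - A + ρ⁻¹ • S) i j ^ 2)
    (P : Matrix (Fin n) (Fin n) ℝ)
    (hP : P = K + ρ • (1 : Matrix (Fin n) (Fin n) ℝ) +
        ρ • Matrix.vecMulVec (fun _ => (1 : ℝ)) fun _ => (1 : ℝ))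
    (Cstar : Matrix (Fin n) (Fin n) ℝ)
    (hCstar : Cstar = P⁻¹ *
        (K + ρ • Matrix.vecMulVec (fun _ => (1 : ℝ)) (fun _ => (1 : ℝ)) -
          Matrix.vecMulVec (fun _ => (1 : ℝ)) δ + ρ • A - S)) :
    IsUnit P ∧ (∀ C, h Cstar ≤ h C) ∧ ∀ C, h C ≤ h Cstar → C = Cstar := by
  -- notation
  set G : Matrix (Fin n) (Fin n) ℝ :=
    Matrix.vecMulVec (fun _ => (1 : ℝ)) (fun _ => (1 : ℝ)) with hG
  -- P is positive definite
  have hPD : P.PosDef := by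
    refine Matrix.PosDef.of_dotProduct_mulVec_pos ?_ ?_
    · rw [hP, hK, hG]
      ext i j
      simp only [Matrix.conjTranspose_apply, Matrix.add_apply, Matrix.smul_apply,
        Matrix.mul_apply, Matrix.one_apply, Matrix.vecMulVec_apply, Matrix.transpose_apply,
        star_trivial, smul_eq_mul, mul_one, one_mul]
      have h1 : (if j = i then (1:ℝ) else 0) = if i = j then 1 else 0 := by
        by_cases hij : i = j <;> simp [hij, eq_comm]
      have h2 : ∑ x, M x j * M x i = ∑ x, M x i * M x j :=
        Finset.sum_congr rfl fun k _ => mul_comm _ _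
      simp only [h1, h2]
    · intro x hx
      have hx1 : ∃ i, x i ≠ 0 := Function.ne_iff.mp hx
      obtain ⟨i0, hi0⟩ := hx1
      have t1 : x ⬝ᵥ ((Mᵀ * M) *ᵥ x) = (M *ᵥ x) ⬝ᵥ (M *ᵥ x) := by
        rw [← Matrix.mulVec_mulVec, Matrix.dotProduct_mulVec, Matrix.vecMul_transpose]
      have t1n : 0 ≤ (M *ᵥ x) ⬝ᵥ (M *ᵥ x) :=
        Finset.sum_nonneg fun _ _ => mul_self_nonneg _
      have t2 : x ⬝ᵥ (G *ᵥ x) = (∑ i, x i) ^ 2 := by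
        simp only [hG, dotProduct, Matrix.mulVec, Matrix.vecMulVec_apply, one_mul]
        rw [← Finset.sum_mul, sq]
      have t3 : 0 < x ⬝ᵥ x :=
        Finset.sum_pos' (fun i _ => mul_self_nonneg _)
          ⟨i0, Finset.mem_univ i0, mul_self_pos.mpr hi0⟩
      have expand : star x ⬝ᵥ (P *ᵥ x) =
          (M *ᵥ x) ⬝ᵥ (M *ᵥ x) + ρ * (x ⬝ᵥ x) + ρ * (∑ i, x i) ^ 2 := by
        rw [hP, hK]
        simp only [star_trivial, Matrix.add_mulVec, Matrix.smul_mulVec,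
          Matrix.one_mulVec, dotProduct_add, dotProduct_smul, smul_eq_mul]
        rw [t1, t2]
      rw [expand]
      nlinarith [sq_nonneg (∑ i, x i)]
  have hPunit : IsUnit P := hPD.isUnit
  have hPdet : IsUnit P.det := P.isUnit_iff_isUnit_det.mp hPunit
  -- the normal equation P * Cstar = L
  have hPC : P * Cstar = K + ρ • G - Matrix.vecMulVec (fun _ => (1 : ℝ)) δ + ρ • A - S := by
    rw [hCstar]
    exact Matrix.mul_nonsing_inv_cancel_left _ _ hPdet
  have hPC' : K * Cstar + ρ • Cstar + ρ • (G * Cstar)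
      = K + ρ • G - Matrix.vecMulVec (fun _ => (1 : ℝ)) δ + ρ • A - S := by
    rw [← hPC, hP]
    simp only [Matrix.add_mul, Matrix.smul_mul, Matrix.one_mul]
  -- abbreviations for the linear part
  set w : Fin n → ℝ := fun i => (Cstarᵀ *ᵥ fun _ => (1 : ℝ)) i - 1 + δ i / ρ with hwdef
  set W : Matrix (Fin n) (Fin n) ℝ := Cstar - A + ρ⁻¹ • S with hWdef
  have hw : Matrix.vecMulVec (fun _ => (1 : ℝ)) w =
      G * Cstar - G + ρ⁻¹ • Matrix.vecMulVec (fun _ => (1 : ℝ)) δ := by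
    ext i j
    simp only [Matrix.vecMulVec_apply, Matrix.sub_apply, Matrix.add_apply,
      Matrix.smul_apply, Matrix.mul_apply, Matrix.mulVec, dotProduct,
      Matrix.transpose_apply, one_mul, mul_one, smul_eq_mul, hwdef, hG]
    rw [div_eq_inv_mul]
  -- the gradient at Cstar vanishes
  have hZ : K * Cstar - K + ρ • Matrix.vecMulVec (fun _ => (1 : ℝ)) w + ρ • W = 0 := by
    rw [hw, hWdef]
    have : K * Cstar - K +
        ρ • (G * Cstar - G + ρ⁻¹ • Matrix.vecMulVec (fun _ => (1 : ℝ)) δ) +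
        ρ • (Cstar - A + ρ⁻¹ • S)
        = (K * Cstar + ρ • Cstar + ρ • (G * Cstar)) -
          (K + ρ • G - Matrix.vecMulVec (fun _ => (1 : ℝ)) δ + ρ • A - S) := by
      simp only [smul_add, smul_sub, smul_smul, mul_inv_cancel₀ hρ.ne', one_smul]
      abel
    rw [this, hPC', sub_self]
  have hZD : ∀ D : Matrix (Fin n) (Fin n) ℝ,
      inn (K * Cstar - K) D + ρ * inn (Matrix.vecMulVec (fun _ => (1 : ℝ)) w) D
        + ρ * inn W D = 0 := by
    intro D
    have h0 : inn (K * Cstar - K + ρ • Matrix.vecMulVec (fun _ => (1 : ℝ)) w + ρ • W) D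
        = 0 := by rw [hZ]; exact inn_zero_left D
    rwa [inn_add_left, inn_add_left, inn_smul_left, inn_smul_left] at h0
  -- the key quadratic-expansion identity
  have key : ∀ C, h C = h Cstar +
      ((1 / 2) * inn (M * (C - Cstar)) (M * (C - Cstar)) +
        (ρ / 2) * (∑ i, ((C - Cstar)ᵀ *ᵥ fun _ => (1 : ℝ)) i ^ 2) +
        (ρ / 2) * inn (C - Cstar) (C - Cstar)) := by
    intro C
    set D : Matrix (Fin n) (Fin n) ℝ := C - Cstar with hD
    rw [hh C, hh Cstar]
    -- term 1
    have e1 : M - M * C = (M - M * Cstar) - M * D := by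
      rw [hD, Matrix.mul_sub]; abel
    have T1 : ∑ i, ∑ j, (M - M * C) i j ^ 2 =
        (∑ i, ∑ j, (M - M * Cstar) i j ^ 2) - 2 * inn (M - M * Cstar) (M * D)
          + inn (M * D) (M * D) := by
      rw [e1, sum_sq_sub, sum_sq_eq_inn (M * D)]
    -- term 2
    have e2 : ∀ i, (Cᵀ *ᵥ fun _ => (1 : ℝ)) i - 1 + δ i / ρ
        = w i + (Dᵀ *ᵥ fun _ => (1 : ℝ)) i := by
      intro i
      have : Dᵀ = Cᵀ - Cstarᵀ := by rw [hD, Matrix.transpose_sub]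
      rw [this, Matrix.sub_mulVec]
      simp only [Pi.sub_apply, hwdef]
      ring
    have T2 : ∑ i, ((Cᵀ *ᵥ fun _ => (1 : ℝ)) i - 1 + δ i / ρ) ^ 2 =
        (∑ i, w i ^ 2) + 2 * (∑ i, w i * (Dᵀ *ᵥ fun _ => (1 : ℝ)) i)
          + ∑ i, ((Dᵀ *ᵥ fun _ => (1 : ℝ)) i) ^ 2 := by
      rw [Finset.sum_congr rfl fun i _ => by rw [e2 i]]
      exact vsum_add w _
    -- term 3
    have e3 : C - A + ρ⁻¹ • S = W + D := by
      rw [hWdef, hD]; abel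
    have T3 : ∑ i, ∑ j, (C - A + ρ⁻¹ • S) i j ^ 2 =
        (∑ i, ∑ j, W i j ^ 2) + 2 * inn W D + inn D D := by
      rw [e3, sum_sq_add, sum_sq_eq_inn D]
    -- the Cstar-terms of `hh Cstar`
    have S2 : ∑ i, ((Cstarᵀ *ᵥ fun _ => (1 : ℝ)) i - 1 + δ i / ρ) ^ 2 = ∑ i, w i ^ 2 := by
      exact Finset.sum_congr rfl fun i _ => by rw [hwdef]
    have S3 : ∑ i, ∑ j, (Cstar - A + ρ⁻¹ • S) i j ^ 2 = ∑ i, ∑ j, W i j ^ 2 := by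
      rw [hWdef]
    rw [T1, T2, T3, S2, S3]
    -- cross terms vanish
    have c1 : inn (M - M * Cstar) (M * D) = - inn (K * Cstar - K) D := by
      rw [inn_mul_right]
      have : Mᵀ * (M - M * Cstar) = -(K * Cstar - K) := by
        rw [Matrix.mul_sub, ← Matrix.mul_assoc, ← hK]; abel
      rw [this, inn_neg_left]
    have c2 : ∑ i, w i * (Dᵀ *ᵥ fun _ => (1 : ℝ)) i
        = inn (Matrix.vecMulVec (fun _ => (1 : ℝ)) w) D := cross_vec w D
    rw [c1, c2]
    have := hZD D
    linear_combination this
  -- conclusion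
  refine ⟨hPunit, ?_, ?_⟩
  · intro C
    rw [key C]
    have q1 := inn_self_nonneg (M * (C - Cstar))
    have q2 : 0 ≤ ∑ i, ((C - Cstar)ᵀ *ᵥ fun _ => (1 : ℝ)) i ^ 2 :=
      Finset.sum_nonneg fun i _ => sq_nonneg _
    have q3 := inn_self_nonneg (C - Cstar)
    nlinarith
  · intro C hC
    rw [key C] at hC
    have q1 := inn_self_nonneg (M * (C - Cstar))
    have q2 : 0 ≤ ∑ i, ((C - Cstar)ᵀ *ᵥ fun _ => (1 : ℝ)) i ^ 2 :=
      Finset.sum_nonneg fun i _ => sq_nonneg _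
    have q3 : inn (C - Cstar) (C - Cstar) ≤ 0 := by nlinarith
    have := inn_self_le_zero_eq_zero _ q3
    have hC0 : C - Cstar = 0 := this
    have := sub_eq_zero.mp hC0
    exact this
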